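/- For every ε ∈ (0,1) there exists δ > 0 with the following property: for all integers 0 ≤ j < k ≤ q, if there exists a point x ∈ Ω with −δ ≤ u_j(x) ≤ 0 and −δ ≤ u_k(x) ≤ 0, then ⟨N_j, N_k⟩ ≤ ε. -/
import Mathlib


open scoped RealInnerProductSpace

theorem stmt_0 (n q : ℕ) (hn : 3 ≤ n) (hq : 1 ≤ q)
    (u : ℕ → EuclideanSpace ℝ (Fin n) → ℝ)
    (N : ℕ → EuclideanSpace ℝ (Fin n)) (c : ℕ → ℝ)
    (hN : ∀ k ≤ q, ‖N k‖ = 1)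
    (hu : ∀ k ≤ q, ∀ x, u k x = ⟪N k, x⟫ + c k)
    (Ω : Set (EuclideanSpace ℝ (Fin n)))
    (hΩ : Ω = {x | ∀ m ≤ q, u m x ≤ 0})
    (hcomp : IsCompact Ω) (hint : (interior Ω).Nonempty)
    (hA : ∀ k ≤ q, ∃ x, 0 < u k x ∧ ∀ m ≤ q, m ≠ k → u m x ≤ 0)
    (hB : ∀ j k, j < k → k ≤ q → (∃ x ∈ Ω, u j x = 0 ∧ u k x = 0) →
      ⟪N j, N k⟫ ≤ 0) :
    ∀ ε : ℝ, 0 < ε → ε < 1 → ∃ δ > 0, ∀ j k, j < k → k ≤ q →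
      (∃ x ∈ Ω, -δ ≤ u j x ∧ u j x ≤ 0 ∧ -δ ≤ u k x ∧ u k x ≤ 0) →
      ⟪N j, N k⟫ ≤ ε := by
  intro ε hε hε1
  classical
  have key : ∀ j k : ℕ, ∃ δ : ℝ, 0 < δ ∧ (j < k → k ≤ q →
      (∃ x ∈ Ω, -δ ≤ u j x ∧ u j x ≤ 0 ∧ -δ ≤ u k x ∧ u k x ≤ 0) →
      ⟪N j, N k⟫ ≤ ε) := by
    intro j k
    by_cases hle : ⟪N j, N k⟫ ≤ ε
    · exact ⟨1, one_pos, fun _ _ _ => hle⟩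
    by_cases hjk : j < k ∧ k ≤ q
    swap
    · refine ⟨1, one_pos, fun h1 h2 _ => absurd ⟨h1, h2⟩ hjk⟩
    obtain ⟨hjk1, hjk2⟩ := hjk
    have hjq : j ≤ q := le_of_lt (lt_of_lt_of_le hjk1 hjk2)
    have hS : ¬∃ x ∈ Ω, u j x = 0 ∧ u k x = 0 := fun h' =>
      hle (le_trans (hB j k hjk1 hjk2 h') hε.le)
    have hΩne : Ω.Nonempty := hint.mono interior_subset
    have hcont : Continuous fun x => min (u j x) (u k x) := by
      have h1 : Continuous (u j) := by
        have : u j = fun x => ⟪N j, x⟫ + c j := funext (hu j hjq)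
        rw [this]
        exact (continuous_const.inner continuous_id).add continuous_const
      have h2 : Continuous (u k) := by
        have : u k = fun x => ⟪N k, x⟫ + c k := funext (hu k hjk2)
        rw [this]
        exact (continuous_const.inner continuous_id).add continuous_const
      exact h1.min h2
    obtain ⟨x0, hx0Ω, hmax⟩ := hcomp.exists_isMaxOn hΩne hcont.continuousOn
    have huj0 : u j x0 ≤ 0 := by rw [hΩ] at hx0Ω; exact hx0Ω j hjq
    have huk0 : u k x0 ≤ 0 := by rw [hΩ] at hx0Ω; exact hx0Ω k hjk2
    have hne0 : min (u j x0) (u k x0) ≠ 0 := by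
      intro h
      have h' : (0:ℝ) ≤ min (u j x0) (u k x0) := h.ge
      rw [le_min_iff] at h'
      exact hS ⟨x0, hx0Ω, le_antisymm huj0 h'.1, le_antisymm huk0 h'.2⟩
    have hneg : min (u j x0) (u k x0) < 0 :=
      lt_of_le_of_ne (le_trans (min_le_left _ _) huj0) hne0
    refine ⟨-(min (u j x0) (u k x0)) / 2, by linarith, ?_⟩
    rintro _ _ ⟨x, hxΩ, h1, h2, h3, h4⟩
    exfalso
    have hmx := hmax hxΩ
    simp only [Set.mem_setOf_eq] at hmx
    have : -(-(min (u j x0) (u k x0)) / 2) ≤ min (u j x) (u k x) := le_min h1 h3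
    have := le_trans this hmx
    linarith
  choose d hd using key
  set P := (Finset.range (q+1)) ×ˢ (Finset.range (q+1)) with hP
  have hPne : P.Nonempty := ⟨(0,0), by simp [hP]⟩
  refine ⟨P.inf' hPne (fun p => d p.1 p.2), ?_, ?_⟩
  · rw [gt_iff_lt, Finset.lt_inf'_iff]
    exact fun p _ => (hd p.1 p.2).1
  · rintro j k hjk hk ⟨x, hx, h1, h2, h3, h4⟩
    have hmem : (j, k) ∈ P := by
      simp only [hP, Finset.mem_product, Finset.mem_range]
      omega
    have hle : P.inf' hPne (fun p => d p.1 p.2) ≤ d j k :=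
      Finset.inf'_le _ hmem
    exact (hd j k).2 hjk hk ⟨x, hx, le_trans (by linarith) h1, h2,
      le_trans (by linarith) h3, h4⟩
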